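/- (Energy-optimality of the affine control) Fix real numbers t0 < tf and boundary data p0, v0, pf, vf ∈ ℝ. Consider controls u : [t0, tf] → ℝ that are continuous, together with the associated states v(t) = v0 + ∫_{t0}^{t} u(τ) dτ and p(t) = p0 + ∫_{t0}^{t} v(τ) dτ, and which satisfy the terminal conditions p(tf) = pf and v(tf) = vf. Suppose u*(t) = α·t + c is an affine control that is admissible in this sense (its state reaches (pf, vf) at tf). Then for every admissible continuous control u, (1/2)∫_{t0}^{tf} u*(t)² dt ≤ (1/2)∫_{t0}^{tf} u(t)² dt; that is, the affine control minimizes the energy cost J(u) = (1/2)∫_{t0}^{tf} u(t)² dt among all admissible controls. -/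
import Mathlib

open intervalIntegral MeasureTheory in
/-- Integration by parts for the iterated integral of a continuous function. -/
lemma iterated_integral_parts (t0 tf : ℝ) (g : ℝ → ℝ) (hg : Continuous g) :
    (∫ t in t0..tf, (∫ τ in t0..t, g τ)) =
      tf * (∫ τ in t0..tf, g τ) - ∫ t in t0..tf, t * g t := by
  have hG : ∀ x ∈ Set.uIcc t0 tf, HasDerivAt (fun s => ∫ τ in t0..s, g τ) (g x) x := by
    intro x _
    exact intervalIntegral.integral_hasDerivAt_right (hg.intervalIntegrable _ _)
      hg.aestronglyMeasurable.stronglyMeasurableAtFilter hg.continuousAt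
  have hid : ∀ x ∈ Set.uIcc t0 tf, HasDerivAt (fun s : ℝ => s) (1 : ℝ) x :=
    fun x _ => hasDerivAt_id x
  have h := intervalIntegral.integral_mul_deriv_eq_deriv_mul hid hG
    (continuous_const.intervalIntegrable _ _) (hg.intervalIntegrable _ _)
  simp only [intervalIntegral.integral_same, mul_zero, sub_zero, one_mul] at h
  linarith [h]

open intervalIntegral in
/-- **Energy-optimality of the affine control.** Among all continuous
controls `u` on `[t0, tf]` whose double-integrator state
`v(t) = v0 + ∫_{t0}^{t} u`, `p(t) = p0 + ∫_{t0}^{t} v` reaches the terminal data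
`(pf, vf)` at time `tf`, an admissible affine control `u*(t) = α t + c` minimizes the
energy cost `J(u) = (1/2)∫_{t0}^{tf} u(t)² dt`. -/
theorem affine_control_minimizes_energy
    (t0 tf p0 v0 pf vf α c : ℝ) (ht : t0 < tf)
    (hstar_v : v0 + ∫ τ in t0..tf, (α * τ + c) = vf)
    (hstar_p : p0 + (∫ t in t0..tf, (v0 + ∫ τ in t0..t, (α * τ + c))) = pf) :
    ∀ u : ℝ → ℝ, ContinuousOn u (Set.Icc t0 tf) →
      v0 + (∫ τ in t0..tf, u τ) = vf →
      p0 + (∫ t in t0..tf, (v0 + ∫ τ in t0..t, u τ)) = pf →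
      (1 / 2) * (∫ t in t0..tf, (α * t + c) ^ 2) ≤
        (1 / 2) * (∫ t in t0..tf, (u t) ^ 2) := by
  intro u hu huv hup
  -- continuous extension of u to all of ℝ
  set U : ℝ → ℝ := fun t => u (min (max t t0) tf) with hU
  have hmem : ∀ t : ℝ, min (max t t0) tf ∈ Set.Icc t0 tf := by
    intro t
    constructor
    · exact le_min (le_max_right _ _) ht.le
    · exact min_le_right _ _
  have hUc : Continuous U :=
    hu.comp_continuous (by continuity) hmem
  have hEq : Set.EqOn u U (Set.uIcc t0 tf) := by
    intro t htmem
    rw [Set.uIcc_of_le ht.le] at htmem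
    simp only [hU]
    rw [max_eq_left htmem.1, min_eq_left htmem.2]
  have hEqsub : ∀ t ∈ Set.uIcc t0 tf, (∫ τ in t0..t, u τ) = ∫ τ in t0..t, U τ := by
    intro t htmem
    rw [Set.uIcc_of_le ht.le] at htmem
    apply intervalIntegral.integral_congr
    intro s hs
    rw [Set.uIcc_of_le htmem.1] at hs
    exact hEq (by rw [Set.uIcc_of_le ht.le]; exact ⟨hs.1, hs.2.trans htmem.2⟩)
  -- rewrite hypotheses in terms of U
  have hIv : (∫ τ in t0..tf, u τ) = ∫ τ in t0..tf, U τ :=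
    intervalIntegral.integral_congr hEq
  have hIp : (∫ t in t0..tf, (v0 + ∫ τ in t0..t, u τ))
      = ∫ t in t0..tf, (v0 + ∫ τ in t0..t, U τ) := by
    apply intervalIntegral.integral_congr
    intro t htmem
    show v0 + (∫ τ in t0..t, u τ) = v0 + ∫ τ in t0..t, U τ
    rw [hEqsub t htmem]
  have hIu2 : (∫ t in t0..tf, (u t) ^ 2) = ∫ t in t0..tf, (U t) ^ 2 := by
    apply intervalIntegral.integral_congr
    intro t htmem
    show (u t) ^ 2 = (U t) ^ 2
    rw [hEq htmem]
  rw [hIv] at huv; rw [hIp] at hup; rw [hIu2]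
  -- set up w = U - u*
  set f : ℝ → ℝ := fun t => α * t + c with hf
  have hfc : Continuous f := by continuity
  set w : ℝ → ℝ := fun t => U t - f t with hw
  have hwc : Continuous w := hUc.sub hfc
  have hfint : IntervalIntegrable f Real.measureSpace.volume t0 tf := hfc.intervalIntegrable _ _
  have hUint : IntervalIntegrable U Real.measureSpace.volume t0 tf := hUc.intervalIntegrable _ _
  -- ∫ w = 0
  have hw0 : (∫ τ in t0..tf, w τ) = 0 := by
    have : (∫ τ in t0..tf, w τ) = (∫ τ in t0..tf, U τ) - ∫ τ in t0..tf, f τ :=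
      intervalIntegral.integral_sub hUint hfint
    rw [this]; linarith
  -- ∫ (∫ w) = 0
  have hWc : ∀ t : ℝ, (∫ τ in t0..t, w τ) = (∫ τ in t0..t, U τ) - ∫ τ in t0..t, f τ :=
    fun t => intervalIntegral.integral_sub (hUc.intervalIntegrable _ _) (hfc.intervalIntegrable _ _)
  have hIUc : Continuous (fun t => ∫ τ in t0..t, U τ) :=
    intervalIntegral.continuous_primitive (fun a b => hUc.intervalIntegrable a b) t0
  have hIfc : Continuous (fun t => ∫ τ in t0..t, f τ) :=
    intervalIntegral.continuous_primitive (fun a b => hfc.intervalIntegrable a b) t0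
  have hww0 : (∫ t in t0..tf, (∫ τ in t0..t, w τ)) = 0 := by
    have h1 : (∫ t in t0..tf, (∫ τ in t0..t, w τ))
        = (∫ t in t0..tf, (∫ τ in t0..t, U τ)) - ∫ t in t0..tf, (∫ τ in t0..t, f τ) := by
      rw [← intervalIntegral.integral_sub (hIUc.intervalIntegrable _ _) (hIfc.intervalIntegrable _ _)]
      apply intervalIntegral.integral_congr
      intro t _
      exact hWc t
    have h2 : (∫ t in t0..tf, (v0 + ∫ τ in t0..t, U τ))
        = (tf - t0) * v0 + ∫ t in t0..tf, (∫ τ in t0..t, U τ) := by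
      rw [intervalIntegral.integral_add (intervalIntegrable_const) (hIUc.intervalIntegrable _ _)]
      simp [mul_comm]
    have h3 : (∫ t in t0..tf, (v0 + ∫ τ in t0..t, f τ))
        = (tf - t0) * v0 + ∫ t in t0..tf, (∫ τ in t0..t, f τ) := by
      rw [intervalIntegral.integral_add (intervalIntegrable_const) (hIfc.intervalIntegrable _ _)]
      simp [mul_comm]
    rw [h2] at hup
    rw [h3] at hstar_p
    rw [h1]
    linarith
  -- deduce ∫ t * w t = 0
  have hparts := iterated_integral_parts t0 tf w hwc
  rw [hww0, hw0, mul_zero] at hparts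
  have htw0 : (∫ t in t0..tf, t * w t) = 0 := by linarith
  -- ∫ f * w = 0
  have hfw0 : (∫ t in t0..tf, f t * w t) = 0 := by
    have : (∫ t in t0..tf, f t * w t)
        = α * (∫ t in t0..tf, t * w t) + c * ∫ t in t0..tf, w t := by
      rw [← intervalIntegral.integral_const_mul, ← intervalIntegral.integral_const_mul,
          ← intervalIntegral.integral_add]
      · apply intervalIntegral.integral_congr
        intro t _
        simp [hf]; ring
      · exact ((continuous_const.mul (continuous_id.mul hwc))).intervalIntegrable _ _
      · exact (continuous_const.mul hwc).intervalIntegrable _ _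
    rw [this, htw0, hw0]; ring
  -- expand ∫ U² = ∫ f² + 2 ∫ f w + ∫ w²
  have hexp : (∫ t in t0..tf, (U t) ^ 2)
      = (∫ t in t0..tf, (f t) ^ 2) + 2 * (∫ t in t0..tf, f t * w t)
        + ∫ t in t0..tf, (w t) ^ 2 := by
    have : (∫ t in t0..tf, (U t) ^ 2)
        = ∫ t in t0..tf, ((f t) ^ 2 + 2 * (f t * w t) + (w t) ^ 2) := by
      apply intervalIntegral.integral_congr
      intro t _
      simp only [hw]; ring
    rw [this, intervalIntegral.integral_add, intervalIntegral.integral_add,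
        intervalIntegral.integral_const_mul]
    · exact (hfc.pow 2).intervalIntegrable _ _
    · exact (continuous_const.mul (hfc.mul hwc)).intervalIntegrable _ _
    · exact ((hfc.pow 2).add (continuous_const.mul (hfc.mul hwc))).intervalIntegrable _ _
    · exact (hwc.pow 2).intervalIntegrable _ _
  have hwsq : 0 ≤ ∫ t in t0..tf, (w t) ^ 2 := by
    apply intervalIntegral.integral_nonneg ht.le
    intro t _
    positivity
  rw [hexp, hfw0]
  nlinarith [hwsq]
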